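/- Let K be an algebraically closed field of characteristic 0 and let F = x² + y·z ∈ K[x,y,z]. For an invertible 3×3 matrix M over K, the following are equivalent: (i) there exists λ ∈ K, λ ≠ 0, with F∘M = λ·F; (ii) there exist a, b, c, d ∈ K with a·d − b·c ≠ 0 and μ ∈ K, μ ≠ 0, such that M = μ · [[a·d+b·c, b·d, −a·c], [2c·d, d², −c²], [−2a·b, −b², a²]]. Moreover, in case (ii) one has F∘M = μ²·(a·d−b·c)²·F. -/

import Mathlib

open MvPolynomial

/-- The polynomial `F ∘ M`, obtained by substituting the variable `i` by
`∑ j, M i j * X j` in `F`. -/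
noncomputable def applyMatrix {K : Type*} [Field K]
    (M : Matrix (Fin 3) (Fin 3) K) (F : MvPolynomial (Fin 3) K) :
    MvPolynomial (Fin 3) K :=
  aeval (fun i => ∑ j : Fin 3, C (M i j) * X j) F

set_option maxHeartbeats 1000000 in
theorem conic_stabilizer
    {K : Type*} [Field K] [IsAlgClosed K] [CharZero K]
    (F : MvPolynomial (Fin 3) K) (hF : F = (X 0) ^ 2 + X 1 * X 2)
    (M : Matrix (Fin 3) (Fin 3) K) (hM : IsUnit M) :
    ((∃ l : K, l ≠ 0 ∧ applyMatrix M F = MvPolynomial.C l * F) ↔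
      (∃ a b c d μ : K, a * d - b * c ≠ 0 ∧ μ ≠ 0 ∧
        M = μ • !![a * d + b * c, b * d, -(a * c);
                   2 * c * d, d ^ 2, -(c ^ 2);
                   -(2 * a * b), -(b ^ 2), a ^ 2])) ∧
    (∀ a b c d μ : K, a * d - b * c ≠ 0 → μ ≠ 0 →
      M = μ • !![a * d + b * c, b * d, -(a * c);
                 2 * c * d, d ^ 2, -(c ^ 2);
                 -(2 * a * b), -(b ^ 2), a ^ 2] →
      applyMatrix M F = MvPolynomial.C (μ ^ 2 * (a * d - b * c) ^ 2) * F) := by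
  subst hF
  -- the computation part
  have comp : ∀ a b c d μ : K,
      M = μ • !![a * d + b * c, b * d, -(a * c);
                 2 * c * d, d ^ 2, -(c ^ 2);
                 -(2 * a * b), -(b ^ 2), a ^ 2] →
      applyMatrix M ((X 0) ^ 2 + X 1 * X 2)
        = MvPolynomial.C (μ ^ 2 * (a * d - b * c) ^ 2) * ((X 0) ^ 2 + X 1 * X 2) := by
    intro a b c d μ hMeq
    rw [hMeq]
    simp only [applyMatrix, map_add, map_mul, map_pow, aeval_X, Fin.sum_univ_three,
      Matrix.smul_apply, smul_eq_mul, Matrix.of_apply, Matrix.cons_val', Matrix.cons_val_zero,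
      Matrix.cons_val_one, Matrix.head_cons, Matrix.empty_val', Matrix.cons_val_fin_one,
      Matrix.head_fin_const, Matrix.cons_val_two, Matrix.tail_cons]
    push_cast [C_mul, C_add, C_neg, C_pow, C_sub, map_ofNat]
    ring
  refine ⟨⟨?_, ?_⟩, fun a b c d μ h1 h2 h3 => comp a b c d μ h3⟩
  swap
  · rintro ⟨a, b, c, d, μ, h1, h2, h3⟩
    exact ⟨μ ^ 2 * (a * d - b * c) ^ 2,
      mul_ne_zero (pow_ne_zero _ h2) (pow_ne_zero _ h1), comp a b c d μ h3⟩
  rintro ⟨l, hl, h⟩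
  -- extract the coefficient equations by evaluating at six points
  have h0 := congrArg (eval ![(1:K),0,0]) h
  have h1 := congrArg (eval ![(0:K),1,0]) h
  have h2 := congrArg (eval ![(0:K),0,1]) h
  have h01 := congrArg (eval ![(1:K),1,0]) h
  have h02 := congrArg (eval ![(1:K),0,1]) h
  have h12 := congrArg (eval ![(0:K),1,1]) h
  simp [applyMatrix, Fin.sum_univ_three] at h0 h1 h2 h01 h02 h12
  have hC1 : M 0 0^2 + M 1 0 * M 2 0 = l := by linear_combination h0
  have hC2 : M 0 1^2 + M 1 1 * M 2 1 = 0 := by linear_combination h1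
  have hC3 : M 0 2^2 + M 1 2 * M 2 2 = 0 := by linear_combination h2
  have hC4 : 2*(M 0 0*M 0 1) + M 1 0*M 2 1 + M 1 1*M 2 0 = 0 := by
    linear_combination h01 - h0 - h1
  have hC5 : 2*(M 0 0*M 0 2) + M 1 0*M 2 2 + M 1 2*M 2 0 = 0 := by
    linear_combination h02 - h0 - h2
  have hC6 : 2*(M 0 1*M 0 2) + M 1 1*M 2 2 + M 1 2*M 2 1 = l := by
    linear_combination h12 - h1 - h2
  clear h0 h1 h2 h01 h02 h12 h comp
  have hd : M.det ≠ 0 := by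
    have := (Matrix.isUnit_iff_isUnit_det M).mp hM
    exact isUnit_iff_ne_zero.mp this
  -- derive the "row" equations via  M ⬝ A⁻¹ ⬝ Mᵀ = l • A⁻¹
  have hdetT : IsUnit (Matrix.transpose M).det := by
    rw [Matrix.det_transpose]
    exact hM.map Matrix.detMonoidHom
  clear hM
  have hAB : (!![1,0,0;0,0,1/2;0,1/2,0] : Matrix (Fin 3) (Fin 3) K) * !![1,0,0;0,0,2;0,2,0] = 1 := by
    rw [Matrix.one_fin_three, Matrix.mul_fin_three]; norm_num
  have hBA : (!![1,0,0;0,0,2;0,2,0] : Matrix (Fin 3) (Fin 3) K) * !![1,0,0;0,0,1/2;0,1/2,0] = 1 := by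
    rw [Matrix.one_fin_three, Matrix.mul_fin_three]; norm_num
  have hMAM : Matrix.transpose M * !![1,0,0;0,0,1/2;0,1/2,0] * M = l • !![1,0,0;0,0,1/2;0,1/2,0] := by
    ext i j
    fin_cases i <;> fin_cases j <;>
      simp [Matrix.mul_apply, Fin.sum_univ_three, Matrix.smul_apply, Matrix.vecHead,
        Matrix.vecTail] <;>
      first
        | linear_combination hC1
        | linear_combination hC2
        | linear_combination hC3
        | linear_combination hC4/2
        | linear_combination hC5/2
        | linear_combination hC6/2
  have k1 : Matrix.transpose M * !![1,0,0;0,0,1/2;0,1/2,0] * M * !![1,0,0;0,0,2;0,2,0] *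
      Matrix.transpose M = l • Matrix.transpose M := by
    rw [hMAM]
    simp only [Matrix.smul_mul]
    rw [hAB, Matrix.one_mul]
  have k2 : !![1,0,0;0,0,1/2;0,1/2,0] * M * !![1,0,0;0,0,2;0,2,0] * Matrix.transpose M
      = l • (1 : Matrix (Fin 3) (Fin 3) K) := by
    have e : (Matrix.transpose M)⁻¹ * (Matrix.transpose M * !![1,0,0;0,0,1/2;0,1/2,0] * M *
        !![1,0,0;0,0,2;0,2,0] * Matrix.transpose M)
        = (Matrix.transpose M)⁻¹ * (l • Matrix.transpose M) := by rw [k1]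
    rw [Matrix.mul_smul, Matrix.nonsing_inv_mul _ hdetT] at e
    rw [← e]
    simp only [← Matrix.mul_assoc]
    rw [Matrix.nonsing_inv_mul _ hdetT, Matrix.one_mul]
  have hMBM : M * !![1,0,0;0,0,2;0,2,0] * Matrix.transpose M = l • !![1,0,0;0,0,2;0,2,0] := by
    have e : (!![1,0,0;0,0,2;0,2,0] : Matrix (Fin 3) (Fin 3) K) *
        (!![1,0,0;0,0,1/2;0,1/2,0] * M * !![1,0,0;0,0,2;0,2,0] * Matrix.transpose M)
        = !![1,0,0;0,0,2;0,2,0] * (l • 1) := by rw [k2]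
    rw [Matrix.mul_smul, Matrix.mul_one] at e
    rw [← e]
    simp only [← Matrix.mul_assoc]
    rw [hBA, Matrix.one_mul]
  have hR1' := congrArg (fun N => N 0 0) hMBM
  have hR3' := congrArg (fun N => N 2 2) hMBM
  have hR5' := congrArg (fun N => N 0 2) hMBM
  simp [Matrix.mul_apply, Fin.sum_univ_three, Matrix.smul_apply, Matrix.transpose_apply,
    Matrix.vecHead, Matrix.vecTail] at hR1' hR3' hR5'
  have hR1 : M 0 0^2 + 4*(M 0 1 * M 0 2) = l := by linear_combination hR1'
  have hR3 : M 2 0^2 + 4*(M 2 1*M 2 2) = 0 := by linear_combination hR3'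
  have hR5 : M 0 0*M 2 0 + 2*(M 0 1*M 2 2) + 2*(M 0 2*M 2 1) = 0 := by linear_combination hR5'
  clear hR1' hR3' hR5' hMBM k1 k2 hMAM hAB hBA hdetT
  -- construct the witnesses
  by_cases h22 : M 2 2 = 0
  · -- degenerate case: a = 0
    have h20 : M 2 0 = 0 := by
      have : M 2 0 ^ 2 = 0 := by linear_combination hR3 - 4 * M 2 1 * h22
      exact pow_eq_zero_iff (by norm_num) |>.mp this
    have h02 : M 0 2 = 0 := by
      have : M 0 2 ^ 2 = 0 := by linear_combination hC3 - M 1 2 * h22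
      exact pow_eq_zero_iff (by norm_num) |>.mp this
    have hdet3 : M.det = -(M 0 0 * M 1 2 * M 2 1) := by
      rw [Matrix.det_fin_three]
      linear_combination (M 0 0 * M 1 1 - M 0 1 * M 1 0) * h22 +
        (M 0 1 * M 1 2 - M 0 2 * M 1 1) * h20 + (M 1 0 * M 2 1) * h02
    have h00 : M 0 0 ≠ 0 := fun hz => hd (by rw [hdet3, hz]; ring)
    have h21 : M 2 1 ≠ 0 := fun hz => hd (by rw [hdet3, hz]; ring)
    refine ⟨0, 1, -(M 0 0)/(M 2 1), -(M 0 1)/(M 2 1), -(M 2 1), ?_, by simpa using h21, ?_⟩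
    · have e : (0:K) * (-(M 0 1)/(M 2 1)) - 1 * (-(M 0 0)/(M 2 1)) = M 0 0 / M 2 1 := by ring
      rw [e]
      exact div_ne_zero h00 h21
    · ext i j
      fin_cases i <;> fin_cases j <;> simp [Matrix.smul_apply] <;> (try field_simp)
      · linear_combination h02
      · linear_combination hC4 - M 1 1 * h20
      · linear_combination hC2
      · linear_combination hC6 - hC1 - 2*(M 0 1)*h02 -
          M 1 1*h22 + M 1 0*h20
      · linear_combination h20
      · linear_combination h22
  · -- main case: a = 1
    have hT2 : (M 0 0*M 2 2 - M 2 0*M 0 2)^2 = l * (M 2 2)^2 := by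
      linear_combination (M 2 2)^2*hR1 + (M 0 2)^2*hR3 - 2*(M 0 2)*(M 2 2)*hR5
    have hnum : M 0 0*M 2 2 - M 2 0*M 0 2 ≠ 0 := by
      intro hz
      rw [hz] at hT2
      exact hl (by
        have h2 : (M 2 2)^2 ≠ 0 := pow_ne_zero _ h22
        field_simp at hT2
        exact (mul_eq_zero.mp (hT2.symm.trans (by ring))).resolve_right h2)
    refine ⟨1, -(M 2 0)/(2*M 2 2), -(M 0 2)/(M 2 2),
      (2*M 0 0*M 2 2 - M 2 0*M 0 2)/(2*(M 2 2)^2), M 2 2, ?_, h22, ?_⟩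
    · have e : (1:K) * ((2*M 0 0*M 2 2 - M 2 0*M 0 2)/(2*(M 2 2)^2))
          - (-(M 2 0)/(2*M 2 2)) * (-(M 0 2)/(M 2 2))
          = (M 0 0*M 2 2 - M 2 0*M 0 2)/((M 2 2)^2) := by
        field_simp
        ring
      rw [e]
      exact div_ne_zero hnum (pow_ne_zero _ h22)
    · ext i j
      fin_cases i <;> fin_cases j <;> simp [Matrix.smul_apply] <;> (try field_simp)
      · ring
      · linear_combination -(M 0 2)*hR3 + 2*(M 2 2)*hR5
      · linear_combination -(M 2 0)*hC3 + (M 2 2)*hC5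
      · linear_combination 4*(M 2 2)^2*hC6 - 4*(M 2 2)^2*hR1 + 4*(M 2 2)*(M 0 2)*hR5 -
          (M 0 2)^2*hR3 - 4*(M 2 1)*(M 2 2)*hC3
      · linear_combination hC3
      · linear_combination hR3
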